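/- arXiv:1801.04816 — 2 statements merged into one kernel-verified Lean document; each statement's English description precedes it below -/
import Mathlib

section
/- With the extended Fisher information matrix F̄(p) reordered as F̄₁(p) = P F̄(p) Pᵀ, and R(p) the weighted rigidity matrix of the ranging graph, one has F̄₁(p) = R(p)ᵀ R(p). -/
open Matrix

/-- Euclidean distance between points `(x i, y i)` and `(x j, y j)`. -/
noncomputable def edist2 {N : ℕ} (x y : Fin N → ℝ) (i j : Fin N) : ℝ :=
  Real.sqrt ((x i - x j) ^ 2 + (y i - y j) ^ 2)

/-- Off-diagonal 2×2 block `F_ij` of the Fisher information matrix. -/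
noncomputable def offBlock {N : ℕ} (x y : Fin N → ℝ) (Adj : Fin N → Fin N → Bool)
    (σ α : ℝ) (i j : Fin N) : Matrix (Fin 2) (Fin 2) ℝ :=
  -((if Adj i j then (1 : ℝ) else 0) / (σ ^ 2 * edist2 x y i j ^ (2 * α))) •
    !![(x i - x j) ^ 2, (x i - x j) * (y i - y j);
       (x i - x j) * (y i - y j), (y i - y j) ^ 2]

/-- The 2×2 block of the extended FIM: `F_ii = -∑_{k ∈ N_i} F_ik`, `F_ij` off the diagonal. -/
noncomputable def fimBlock {N : ℕ} (x y : Fin N → ℝ) (Adj : Fin N → Fin N → Bool)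
    (σ α : ℝ) (i j : Fin N) : Matrix (Fin 2) (Fin 2) ℝ :=
  if i = j then
    -∑ k ∈ Finset.univ.filter (fun k => Adj i k = true), offBlock x y Adj σ α i k
  else offBlock x y Adj σ α i j

/-- Extended Fisher information matrix `F̄(p)`, indexed by (vertex, coordinate), i.e. in the
interleaved coordinate ordering `(x₁, y₁, …, x_N, y_N)`. -/
noncomputable def Fbar {N : ℕ} (x y : Fin N → ℝ) (Adj : Fin N → Fin N → Bool)
    (σ α : ℝ) : Matrix (Fin N × Fin 2) (Fin N × Fin 2) ℝ :=
  Matrix.of fun r c => fimBlock x y Adj σ α r.1 c.1 r.2 c.2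

/-- Permutation matrix reordering coordinates from `(x₁, y₁, …, x_N, y_N)` to
`(x₁, …, x_N, y₁, …, y_N)`. -/
def permP (N : ℕ) : Matrix (Fin 2 × Fin N) (Fin N × Fin 2) ℝ :=
  Matrix.of fun r c => if r = (c.2, c.1) then 1 else 0

/-- Reordered extended FIM `F̄₁(p) = P F̄(p) Pᵀ`. -/
noncomputable def Fbar1 {N : ℕ} (x y : Fin N → ℝ) (Adj : Fin N → Fin N → Bool)
    (σ α : ℝ) : Matrix (Fin 2 × Fin N) (Fin 2 × Fin N) ℝ :=
  permP N * Fbar x y Adj σ α * (permP N)ᵀ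

/-- The weighted rigidity matrix `R(p)`: one row per (oriented) edge `e = (e1 e, e2 e)`,
columns ordered as `(x₁, …, x_N, y₁, …, y_N)`.  The row of edge `(i,j)` has entry
`(μ_i - μ_j)/(σ d_ij^α)` in the `μ`-column of `i` and the opposite in the `μ`-column of `j`. -/
noncomputable def rigidityR {N : ℕ} (x y : Fin N → ℝ) (σ α : ℝ) {ι : Type*}
    (e1 e2 : ι → Fin N) : Matrix ι (Fin 2 × Fin N) ℝ :=
  Matrix.of fun e c =>
    ((![x, y] c.1 (e1 e) - ![x, y] c.1 (e2 e)) / (σ * edist2 x y (e1 e) (e2 e) ^ α)) *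
      (if c.2 = e1 e then 1 else if c.2 = e2 e then -1 else 0)

lemma Fbar1_apply {N : ℕ} (x y : Fin N → ℝ) (Adj : Fin N → Fin N → Bool)
    (σ α : ℝ) (a b : Fin 2) (i j : Fin N) :
    Fbar1 x y Adj σ α (a, i) (b, j) = fimBlock x y Adj σ α i j a b := by
  fin_cases a <;> fin_cases b <;>
    simp [Fbar1, Matrix.mul_apply, permP, Fbar, Fintype.sum_prod_type, Prod.ext_iff,
      mul_ite, ite_mul, mul_one, one_mul, mul_zero, zero_mul, Finset.sum_ite_eq,
      Finset.sum_ite_eq']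

lemma edist2_symm {N : ℕ} (x y : Fin N → ℝ) (i j : Fin N) :
    edist2 x y i j = edist2 x y j i := by
  simp only [edist2]; congr 1; ring

lemma offBlock_apply {N : ℕ} (x y : Fin N → ℝ) (Adj : Fin N → Fin N → Bool)
    (σ α : ℝ) (i j : Fin N) (a b : Fin 2) :
    offBlock x y Adj σ α i j a b =
      -((if Adj i j then (1 : ℝ) else 0) / (σ ^ 2 * edist2 x y i j ^ (2 * α))) *
        ((![x, y] a i - ![x, y] a j) * (![x, y] b i - ![x, y] b j)) := by
  fin_cases a <;> fin_cases b <;> simp [offBlock] <;> ring_nf <;> tauto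

lemma div_prod_eq (σ d p q α : ℝ) (hσ : 0 < σ) (hd : 0 < d) :
    (p / (σ * d ^ α)) * (q / (σ * d ^ α)) = 1 / (σ ^ 2 * d ^ (2 * α)) * (p * q) := by
  have h1 : d ^ (2 * α) = d ^ α * d ^ α := by
    rw [two_mul, Real.rpow_add hd]
  have h2 : (d : ℝ) ^ α ≠ 0 := (Real.rpow_pos_of_pos hd α).ne'
  field_simp [h1]
  ring_nf
  rw [mul_comm α 2, h1]; ring

/-- `F̄₁(p) = R(p)ᵀ R(p)`. -/
theorem fbar1_eq_rigidity_transpose_mul_rigidity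
    (n m : ℕ) (x y : Fin (n + m) → ℝ) (Adj : Fin (n + m) → Fin (n + m) → Bool)
    (hsym : ∀ i j, Adj i j = Adj j i) (hirr : ∀ i, Adj i i = false)
    (hne : ∀ i j, Adj i j = true → (x i, y i) ≠ (x j, y j))
    (σ α : ℝ) (hσ : 0 < σ)
    {ι : Type*} [Fintype ι]
    (e1 e2 : ι → Fin (n + m))
    (hedge : ∀ e : ι, Adj (e1 e) (e2 e) = true)
    (huniq : ∀ i j, Adj i j = true →
      ∃! e : ι, (e1 e = i ∧ e2 e = j) ∨ (e1 e = j ∧ e2 e = i)) :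
    Fbar1 x y Adj σ α = (rigidityR x y σ α e1 e2)ᵀ * rigidityR x y σ α e1 e2 := by
  classical
  -- distances along edges are positive
  have hd : ∀ i j, Adj i j = true → 0 < edist2 x y i j := by
    intro i j h
    have hne' := hne i j h
    have h2 : x i ≠ x j ∨ y i ≠ y j := by
      by_contra hc
      push_neg at hc
      exact hne' (by rw [hc.1, hc.2])
    have h3 : 0 < (x i - x j) ^ 2 + (y i - y j) ^ 2 := by
      rcases h2 with h | h
      · have h4 : 0 < (x i - x j) ^ 2 :=
          lt_of_le_of_ne (sq_nonneg _) (Ne.symm (pow_ne_zero 2 (sub_ne_zero.mpr h)))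
        nlinarith [sq_nonneg (y i - y j)]
      · have h4 : 0 < (y i - y j) ^ 2 :=
          lt_of_le_of_ne (sq_nonneg _) (Ne.symm (pow_ne_zero 2 (sub_ne_zero.mpr h)))
        nlinarith [sq_nonneg (x i - x j)]
    exact Real.sqrt_pos.mpr h3
  have hne12 : ∀ e : ι, e1 e ≠ e2 e := by
    intro e h
    have h1 := hedge e
    rw [h, hirr] at h1
    exact Bool.noConfusion h1
  ext ⟨a, i⟩ ⟨b, j⟩
  rw [Fbar1_apply, Matrix.mul_apply]
  simp only [transpose_apply, rigidityR, Matrix.of_apply]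
  by_cases hij : i = j
  · -- diagonal case
    subst hij
    simp only [fimBlock, eq_self_iff_true, if_true, Matrix.neg_apply, Matrix.sum_apply]
    rw [← Finset.sum_neg_distrib]
    have hAdjOther : ∀ e : ι, (i = e1 e ∨ i = e2 e) →
        Adj i (if i = e1 e then e2 e else e1 e) = true := by
      intro e hinc
      by_cases h1 : i = e1 e
      · rw [if_pos h1, h1]; exact hedge e
      · rcases hinc with h | h2
        · exact absurd h h1
        · rw [if_neg h1, hsym, h2]; exact hedge e
    have key : ∀ e : ι, (i = e1 e ∨ i = e2 e) → ∀ k, (if i = e1 e then e2 e else e1 e) = k →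
        ((e1 e = i ∧ e2 e = k) ∨ (e1 e = k ∧ e2 e = i)) := by
      intro e hinc k hk
      by_cases h1 : i = e1 e
      · rw [if_pos h1] at hk; exact Or.inl ⟨h1.symm, hk⟩
      · rw [if_neg h1] at hk
        rcases hinc with h | h2
        · exact absurd h h1
        · exact Or.inr ⟨hk, h2.symm⟩
    have lhs_eq : ∀ k ∈ Finset.univ.filter (fun k => Adj i k = true),
        -(offBlock x y Adj σ α i k a b) =
          1 / (σ ^ 2 * edist2 x y i k ^ (2 * α)) *
            ((![x, y] a i - ![x, y] a k) * (![x, y] b i - ![x, y] b k)) := by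
      intro k hk
      rw [Finset.mem_filter] at hk
      rw [offBlock_apply, if_pos hk.2]
      ring
    rw [Finset.sum_congr rfl lhs_eq]
    have rhs_eq : ∀ e ∈ (Finset.univ : Finset ι),
        (((![x, y] a (e1 e) - ![x, y] a (e2 e)) / (σ * edist2 x y (e1 e) (e2 e) ^ α)) *
            (if i = e1 e then 1 else if i = e2 e then -1 else 0)) *
          (((![x, y] b (e1 e) - ![x, y] b (e2 e)) / (σ * edist2 x y (e1 e) (e2 e) ^ α)) *
            (if i = e1 e then 1 else if i = e2 e then -1 else 0)) =
        (if i = e1 e ∨ i = e2 e then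
          ((![x, y] a (e1 e) - ![x, y] a (e2 e)) / (σ * edist2 x y (e1 e) (e2 e) ^ α)) *
          ((![x, y] b (e1 e) - ![x, y] b (e2 e)) / (σ * edist2 x y (e1 e) (e2 e) ^ α))
        else 0) := by
      intro e _
      by_cases h1 : i = e1 e
      · simp [h1]
      · by_cases h2 : i = e2 e
        · simp only [if_neg h1, if_pos h2, if_pos (Or.inr h2)]; ring
        · simp [h1, h2]
    rw [Finset.sum_congr rfl rhs_eq, ← Finset.sum_filter]
    refine (Finset.sum_bij (fun e _ => if i = e1 e then e2 e else e1 e) ?_ ?_ ?_ ?_).symm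
    · intro e he
      simp only [Finset.mem_filter, Finset.mem_univ, true_and] at he ⊢
      exact hAdjOther e he
    · intro e he e' he' heq
      simp only [Finset.mem_filter, Finset.mem_univ, true_and] at he he'
      have hk := hAdjOther e he
      exact (huniq i _ hk).unique (key e he _ rfl) (key e' he' _ heq.symm)
    · intro k hk
      simp only [Finset.mem_filter, Finset.mem_univ, true_and] at hk
      obtain ⟨e, he, -⟩ := huniq i k hk
      have hik : i ≠ k := by
        intro h; rw [h, hirr] at hk; exact Bool.noConfusion hk
      rcases he with ⟨h1, h2⟩ | ⟨h1, h2⟩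
      · refine ⟨e, by simp [Finset.mem_filter, Or.inl h1.symm], ?_⟩
        show (if i = e1 e then e2 e else e1 e) = k
        rw [if_pos h1.symm]; exact h2
      · refine ⟨e, by simp [Finset.mem_filter, Or.inr h2.symm], ?_⟩
        show (if i = e1 e then e2 e else e1 e) = k
        rw [if_neg (fun h => hik (h.trans h1))]
        exact h1
    · intro e he
      simp only [Finset.mem_filter, Finset.mem_univ, true_and] at he
      beta_reduce
      by_cases h1 : i = e1 e
      · rw [if_pos h1, ← h1]
        exact div_prod_eq σ (edist2 x y i (e2 e)) _ _ α hσ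
          (hd i (e2 e) (by rw [h1]; exact hedge e))
      · have h2 : i = e2 e := he.resolve_left h1
        rw [if_neg h1, ← h2, edist2_symm x y (e1 e) i]
        rw [div_prod_eq σ (edist2 x y i (e1 e)) _ _ α hσ
          (hd i (e1 e) (by rw [hsym, h2]; exact hedge e))]
        ring
  · -- off-diagonal case
    simp only [fimBlock, if_neg hij, offBlock_apply]
    by_cases hadj : Adj i j = true
    · obtain ⟨e₀, he₀, hu⟩ := huniq i j hadj
      rw [Finset.sum_eq_single e₀]
      · have dpos := hd i j hadj
        rcases he₀ with ⟨h1, h2⟩ | ⟨h1, h2⟩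
        · have hji : ¬ j = i := fun h => hij h.symm
          simp only [h1, h2, hadj, eq_self_iff_true, if_true, if_neg hji, if_neg hij]
          have keyv := div_prod_eq σ (edist2 x y i j) (![x, y] a i - ![x, y] a j)
            (![x, y] b i - ![x, y] b j) α hσ dpos
          linear_combination keyv
        · have hsd : edist2 x y j i = edist2 x y i j := edist2_symm x y j i
          simp only [h1, h2, hadj, eq_self_iff_true, if_true, if_neg hij, hsd]
          have keyv := div_prod_eq σ (edist2 x y i j) (![x, y] a j - ![x, y] a i)
            (![x, y] b j - ![x, y] b i) α hσ dpos
          linear_combination keyv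
      · intro e' _ hne0
        by_cases h1 : i = e1 e'
        · by_cases h2 : j = e2 e'
          · exact absurd (hu e' (Or.inl ⟨h1.symm, h2.symm⟩)) hne0
          · have h3 : ¬ j = e1 e' := fun h => hij (h1.trans h.symm)
            simp [h2, h3]
        · by_cases h2 : i = e2 e'
          · by_cases h3 : j = e1 e'
            · exact absurd (hu e' (Or.inr ⟨h3.symm, h2.symm⟩)) hne0
            · have h4 : ¬ j = e2 e' := fun h => hij (h2.trans h.symm)
              simp [h3, h4]
          · simp [h1, h2]
      · intro h; exact absurd (Finset.mem_univ e₀) h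
    · rw [if_neg hadj, zero_div, neg_zero, zero_mul]
      symm
      apply Finset.sum_eq_zero
      intro e _
      by_cases h1 : i = e1 e
      · by_cases h2 : j = e2 e
        · exact absurd (by rw [h1, h2]; exact hedge e) hadj
        · have h3 : ¬ j = e1 e := fun h => hij (h1.trans h.symm)
          simp [h2, h3]
      · by_cases h2 : i = e2 e
        · by_cases h3 : j = e1 e
          · exact absurd (by rw [hsym, h2, h3]; exact hedge e) hadj
          · have h4 : ¬ j = e2 e := fun h => hij (h2.trans h.symm)
            simp [h3, h4]
        · simp [h1, h2]
end

section
/- Fix p_i, p_j ∈ ℝ² with u = p_i − p_j ≠ 0 and d = ‖u‖, and σ > 0. For s ∈ ℝ define ℓ(q, s) = −(s − ln‖q − p_j‖)²/(2σ²), the log-density (up to an additive constant independent of q) of a log-normal range measurement with ln θ ~ N(ln‖q − p_j‖, σ²). Then the expectation, when s is distributed as N(ln d, σ²), of the negative Hessian of q ↦ ℓ(q, s) evaluated at q = p_i equals (1/(σ² d⁴)) u uᵀ; that is, the single-measurement Fisher information matrix for the multiplicative log-normal range model is (1/(σ² d⁴)) (p_i − p_j)(p_i − p_j)ᵀ. 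-/
open MeasureTheory ProbabilityTheory
open scoped NNReal ENNReal

namespace FisherAux

abbrev E2 := EuclideanSpace ℝ (Fin 2)

lemma hN (pj q : E2) : HasFDerivAt (fun q' : E2 => ‖q' - pj‖^2)
    (2 • (innerSL ℝ (q - pj))) q := by
  have := ((hasFDerivAt_id q).sub_const pj).norm_sq
  simpa using this

lemma hlog (pj q : E2) (hq : q ≠ pj) :
    HasFDerivAt (fun q' : E2 => Real.log ‖q' - pj‖)
      ((‖q - pj‖^2)⁻¹ • innerSL ℝ (q - pj)) q := by
  have hn : ‖q - pj‖^2 ≠ 0 := by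
    have : q - pj ≠ 0 := sub_ne_zero.mpr hq
    exact pow_ne_zero _ (norm_ne_zero_iff.mpr this)
  have h1 := ((hN pj q).log hn).const_mul (2⁻¹ : ℝ)
  have hfun : (fun q' : E2 => (2⁻¹ : ℝ) * Real.log (‖q' - pj‖^2))
      = fun q' : E2 => Real.log ‖q' - pj‖ := by
    funext q'
    rw [Real.log_pow]
    push_cast
    ring
  rw [hfun] at h1
  refine h1.congr_fderiv ?_
  ext y
  simp [smul_smul]
  ring

lemma hout (s σ t : ℝ) : HasDerivAt (fun t : ℝ => -(s - t)^2/(2*σ^2)) ((s - t)/σ^2) t := by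
  have h1 : HasDerivAt (fun t : ℝ => -(s - t)^2/(2*σ^2))
      ((-(2*(s - t)*(-1)))/(2*σ^2)) t := by
    simpa using ((((hasDerivAt_id t).const_sub s).pow 2).neg).div_const (2*σ^2)
  convert h1 using 1
  by_cases hσ : σ = 0
  · simp [hσ]
  · field_simp

lemma hell (pj : E2) (s σ : ℝ) (q : E2) (hq : q ≠ pj) :
    HasFDerivAt (fun q' : E2 => -(s - Real.log ‖q' - pj‖)^2/(2*σ^2))
      (((s - Real.log ‖q - pj‖)/σ^2) • ((‖q - pj‖^2)⁻¹ • innerSL ℝ (q - pj))) q :=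
  (hout s σ _).comp_hasFDerivAt q (hlog pj q hq)

lemma inner_fderiv (pj : E2) (s σ : ℝ) (b : Fin 2) (q : E2) (hq : q ≠ pj) :
    fderiv ℝ (fun q' : E2 => -(s - Real.log ‖q' - pj‖)^2/(2*σ^2)) q
      (EuclideanSpace.single b 1)
      = (s - Real.log ‖q - pj‖)/σ^2 * ((‖q - pj‖^2)⁻¹ * (q - pj) b) := by
  rw [(hell pj s σ q hq).fderiv]
  simp only [ContinuousLinearMap.smul_apply, innerSL_apply_apply, smul_eq_mul,
    EuclideanSpace.inner_single_right, RCLike.conj_to_real, conj_trivial, mul_one]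
  ring

lemma hproj (pj : E2) (b : Fin 2) (q : E2) :
    HasFDerivAt (fun q' : E2 => (q' - pj) b)
      (EuclideanSpace.proj b : E2 →L[ℝ] ℝ) q := by
  have h : (fun q' : E2 => (q' - pj) b)
      = fun q' : E2 => (EuclideanSpace.proj b : E2 →L[ℝ] ℝ) q' - pj b := by
    funext q'; simp [PiLp.sub_apply]
  rw [h]
  have h2 : HasFDerivAt (fun q' : E2 => (EuclideanSpace.proj b : E2 →L[ℝ] ℝ) q')
      (EuclideanSpace.proj b : E2 →L[ℝ] ℝ) q :=
    (EuclideanSpace.proj b : E2 →L[ℝ] ℝ).hasFDerivAt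
  exact h2.sub_const (pj b)

lemma hinvsq (pj : E2) (q : E2) (hq : q ≠ pj) :
    HasFDerivAt (fun q' : E2 => (‖q' - pj‖^2)⁻¹)
      ((-((‖q - pj‖^2)^2)⁻¹) • (2 • innerSL ℝ (q - pj))) q := by
  have hn : ‖q - pj‖^2 ≠ 0 := pow_ne_zero _ (norm_ne_zero_iff.mpr (sub_ne_zero.mpr hq))
  exact (hasDerivAt_inv hn).comp_hasFDerivAt q (hN pj q)

lemma outer_fderiv (pj : E2) (s σ : ℝ) (a b : Fin 2) (pi : E2) (hpi : pi ≠ pj) :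
    fderiv ℝ (fun q : E2 =>
        fderiv ℝ (fun q' : E2 => -(s - Real.log ‖q' - pj‖)^2/(2*σ^2)) q
          (EuclideanSpace.single b 1)) pi (EuclideanSpace.single a 1)
    = (σ^2)⁻¹ * ((-(‖pi - pj‖^2)⁻¹ * (pi - pj) a) * ((‖pi - pj‖^2)⁻¹ * (pi - pj) b)
        + (s - Real.log ‖pi - pj‖) *
          ((if b = a then (1:ℝ) else 0) * (‖pi - pj‖^2)⁻¹
            + (pi - pj) b * (-((‖pi - pj‖^2)^2)⁻¹ * (2 * (pi - pj) a)))) := by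
  have hev : (fun q : E2 =>
        fderiv ℝ (fun q' : E2 => -(s - Real.log ‖q' - pj‖)^2/(2*σ^2)) q
          (EuclideanSpace.single b 1))
      =ᶠ[nhds pi] fun q : E2 =>
        (σ^2)⁻¹ * ((s - Real.log ‖q - pj‖) * ((q - pj) b * (‖q - pj‖^2)⁻¹)) := by
    filter_upwards [eventually_ne_nhds hpi] with q hq
    rw [inner_fderiv pj s σ b q hq]
    ring
  rw [hev.fderiv_eq]
  have h1 : HasFDerivAt (fun q : E2 => s - Real.log ‖q - pj‖)
      (-((‖pi - pj‖^2)⁻¹ • innerSL ℝ (pi - pj))) pi := (hlog pj pi hpi).const_sub s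
  have h4 := (hproj pj b pi).mul (hinvsq pj pi hpi)
  have h5 := (h1.mul h4).const_mul ((σ^2)⁻¹ : ℝ)
  rw [HasFDerivAt.fderiv (f := fun q : E2 => (σ^2)⁻¹ * ((s - Real.log ‖q - pj‖) * ((q - pj) b * (‖q - pj‖^2)⁻¹))) h5]
  simp only [ContinuousLinearMap.smul_apply, ContinuousLinearMap.add_apply,
    ContinuousLinearMap.coe_smul', Pi.smul_apply, ContinuousLinearMap.neg_apply,
    innerSL_apply_apply, smul_eq_mul, EuclideanSpace.inner_single_right, RCLike.conj_to_real,
    conj_trivial, mul_one, PiLp.proj_apply, EuclideanSpace.single_apply, Pi.mul_apply]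
  ring

lemma gauss_density (m : ℝ) {v : ℝ≥0} (hv : v ≠ 0) :
    gaussianReal m v = volume.withDensity
      (fun x => ((gaussianPDFReal m v x).toNNReal : ℝ≥0∞)) := by
  rw [gaussianReal_of_var_ne_zero _ hv]
  rfl

lemma meas_pdfNN (m : ℝ) (v : ℝ≥0) :
    Measurable (fun x => (gaussianPDFReal m v x).toNNReal) :=
  (measurable_gaussianPDFReal m v).real_toNNReal

open Real in
lemma integrable_sub_mean (m : ℝ) {v : ℝ≥0} (hv : v ≠ 0) :
    Integrable (fun s => s - m) (gaussianReal m v) := by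
  rw [gauss_density m hv,
    integrable_withDensity_iff_integrable_smul (meas_pdfNN m v)]
  have hvpos : (0:ℝ) < v := lt_of_le_of_ne v.coe_nonneg (by exact_mod_cast hv.symm)
  have h0 : Integrable (fun x : ℝ => x * Real.exp (-(2*(v:ℝ))⁻¹ * x^2)) volume :=
    integrable_mul_exp_neg_mul_sq (by positivity)
  have h1 : Integrable (fun x : ℝ => (√(2 * π * v))⁻¹ *
      (x * Real.exp (-(2*(v:ℝ))⁻¹ * x^2))) volume := h0.const_mul _
  have h2 := h1.comp_sub_right m
  apply h2.congr
  filter_upwards with x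
  have : gaussianPDFReal m v x = (√(2 * π * v))⁻¹ * Real.exp (-(2*(v:ℝ))⁻¹ * (x - m)^2) := by
    rw [gaussianPDFReal]
    congr 1
    rw [neg_div]
    ring_nf
  have hco : ((gaussianPDFReal m v x).toNNReal : ℝ) = gaussianPDFReal m v x :=
    Real.coe_toNNReal _ (gaussianPDFReal_nonneg m v x)
  simp only [NNReal.smul_def, smul_eq_mul]
  rw [hco, this]
  ring

open Real in
lemma integral_sub_mean (m : ℝ) {v : ℝ≥0} (hv : v ≠ 0) :
    ∫ s, (s - m) ∂(gaussianReal m v) = 0 := by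
  rw [gauss_density m hv, integral_withDensity_eq_integral_smul (meas_pdfNN m v)]
  have hfun : ∀ x : ℝ, (gaussianPDFReal m v x).toNNReal • (x - m)
      = (√(2 * π * v))⁻¹ * ((x - m) * Real.exp (-(2*(v:ℝ))⁻¹ * (x - m)^2)) := by
    intro x
    have : gaussianPDFReal m v x = (√(2 * π * v))⁻¹ * Real.exp (-(2*(v:ℝ))⁻¹ * (x - m)^2) := by
      rw [gaussianPDFReal]
      congr 1
      rw [neg_div]
      ring_nf
    have hco : ((gaussianPDFReal m v x).toNNReal : ℝ) = gaussianPDFReal m v x :=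
      Real.coe_toNNReal _ (gaussianPDFReal_nonneg m v x)
    simp only [NNReal.smul_def, smul_eq_mul]
    rw [hco, this]
    ring
  simp_rw [hfun]
  rw [integral_const_mul]
  have hshift : (∫ x : ℝ, (x - m) * Real.exp (-(2*(v:ℝ))⁻¹ * (x - m)^2))
      = ∫ x : ℝ, x * Real.exp (-(2*(v:ℝ))⁻¹ * x^2) := by
    exact integral_sub_right_eq_self (fun x => x * Real.exp (-(2*(v:ℝ))⁻¹ * x^2)) m
  rw [hshift]
  have hodd : (∫ x : ℝ, x * Real.exp (-(2*(v:ℝ))⁻¹ * x^2)) = 0 := by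
    have key := integral_neg_eq_self (fun x : ℝ => x * Real.exp (-(2*(v:ℝ))⁻¹ * x^2)) volume
    have h2 : (fun x : ℝ => (-x) * Real.exp (-(2*(v:ℝ))⁻¹ * (-x)^2))
        = fun x : ℝ => -(x * Real.exp (-(2*(v:ℝ))⁻¹ * x^2)) := by
      funext x
      rw [neg_sq]
      ring
    rw [h2, integral_neg] at key
    linarith
  rw [hodd, mul_zero]

end FisherAux

/-- For the multiplicative log-normal range model with log-density
`ℓ(q, s) = -(s - ln ‖q - p_j‖)²/(2σ²)`, the expectation under `s ~ N(ln d, σ²)` of the negative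
Hessian of `q ↦ ℓ(q, s)` at `q = p_i` equals `(1/(σ² d⁴)) u uᵀ`, entrywise:
its `(a, b)` entry is `(1/(σ² d⁴)) u_a u_b`, where `u = p_i - p_j` and `d = ‖u‖`. -/
theorem fisher_info_lognormal_range
    (pi pj : EuclideanSpace ℝ (Fin 2)) (hne : pi ≠ pj) (σ : ℝ) (hσ : 0 < σ) :
    ∀ a b : Fin 2,
      (∫ s : ℝ,
          -(fderiv ℝ
              (fun q : EuclideanSpace ℝ (Fin 2) =>
                fderiv ℝ
                  (fun q' : EuclideanSpace ℝ (Fin 2) =>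
                    -(s - Real.log ‖q' - pj‖) ^ 2 / (2 * σ ^ 2))
                  q (EuclideanSpace.single b 1))
              pi (EuclideanSpace.single a 1))
        ∂(gaussianReal (Real.log ‖pi - pj‖) (Real.toNNReal (σ ^ 2)))) =
      (1 / (σ ^ 2 * ‖pi - pj‖ ^ 4)) * ((pi - pj) a * (pi - pj) b) := by
  intro a b
  set m := Real.log ‖pi - pj‖ with hm
  have hv : Real.toNNReal (σ ^ 2) ≠ 0 := by
    simp only [ne_eq, Real.toNNReal_eq_zero, not_le]
    positivity
  set n : ℝ := ‖pi - pj‖^2 with hn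
  have hn0 : n ≠ 0 :=
    pow_ne_zero _ (norm_ne_zero_iff.mpr (sub_ne_zero.mpr hne))
  set C1 : ℝ := (σ^2)⁻¹ * (n⁻¹ * n⁻¹ * ((pi - pj) a * (pi - pj) b)) with hC1
  set C2 : ℝ := -((σ^2)⁻¹ * ((if b = a then (1:ℝ) else 0) * n⁻¹
      + (pi - pj) b * (-(n^2)⁻¹ * (2 * (pi - pj) a)))) with hC2
  have key : ∀ s : ℝ,
      -(fderiv ℝ
          (fun q : EuclideanSpace ℝ (Fin 2) =>
            fderiv ℝ
              (fun q' : EuclideanSpace ℝ (Fin 2) =>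
                -(s - Real.log ‖q' - pj‖) ^ 2 / (2 * σ ^ 2))
              q (EuclideanSpace.single b 1))
          pi (EuclideanSpace.single a 1))
      = C1 + C2 * (s - m) := by
    intro s
    rw [FisherAux.outer_fderiv pj s σ a b pi hne]
    rw [hC1, hC2, hm, hn]
    ring
  simp_rw [key]
  rw [integral_add (integrable_const C1)
      ((FisherAux.integrable_sub_mean m hv).const_mul C2),
    integral_const, integral_const_mul, FisherAux.integral_sub_mean m hv,
    mul_zero, add_zero, probReal_univ, smul_eq_mul, one_mul]
  rw [hC1, hn]
  have hσ0 : σ ≠ 0 := ne_of_gt hσ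
  have hd0 : ‖pi - pj‖ ≠ 0 := norm_ne_zero_iff.mpr (sub_ne_zero.mpr hne)
  field_simp
end
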